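/- If M is a finite set of pairwise anticommuting n-qubit Pauli words (each squaring to the identity), then for any n-qubit state ρ, Σ_{m∈M} Tr(mρ)² ≤ 1. -/

import Mathlib

open Matrix BigOperators Finset ComplexOrder

/-- The Pauli matrices, indexed by `Fin 4`: identity, X, Y, Z. -/
noncomputable def pauli : Fin 4 → Matrix (Fin 2) (Fin 2) ℂ
  | 0 => 1
  | 1 => !![0, 1; 1, 0]
  | 2 => !![0, -Complex.I; Complex.I, 0]
  | 3 => !![1, 0; 0, -1]

/-- An `n`-qubit Pauli word: the tensor product of the Pauli matrices `pauli (w i)`,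
realized as a matrix indexed by `Fin n → Fin 2`. -/
noncomputable def pWord {n : ℕ} (w : Fin n → Fin 4) :
    Matrix (Fin n → Fin 2) (Fin n → Fin 2) ℂ :=
  Matrix.of fun x y => ∏ i, pauli (w i) (x i) (y i)

lemma pauli_star (k : Fin 4) (a b : Fin 2) : star (pauli k b a) = pauli k a b := by
  fin_cases k <;> fin_cases a <;> fin_cases b <;>
    simp [pauli, Matrix.one_apply] <;> norm_num

lemma pauli_sq (k : Fin 4) (a b : Fin 2) :
    ∑ t : Fin 2, pauli k a t * pauli k t b = (1 : Matrix (Fin 2) (Fin 2) ℂ) a b := by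
  fin_cases k <;> fin_cases a <;> fin_cases b <;>
    simp [pauli, Fin.sum_univ_two, Matrix.one_apply] <;> ring_nf <;>
    simp [Complex.I_mul_I] <;> ring

lemma pWord_herm {n : ℕ} (w : Fin n → Fin 4) : (pWord w).IsHermitian := by
  ext x y
  simp only [conjTranspose_apply, pWord, Matrix.of_apply, star_prod]
  exact Finset.prod_congr rfl fun i _ => pauli_star _ _ _

lemma pWord_sq {n : ℕ} (w : Fin n → Fin 4) : pWord w * pWord w = 1 := by
  ext x y
  simp only [mul_apply, pWord, Matrix.of_apply]
  have : ∀ z : Fin n → Fin 2, (∏ i, pauli (w i) (x i) (z i)) * ∏ i, pauli (w i) (z i) (y i)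
      = ∏ i, (pauli (w i) (x i) (z i) * pauli (w i) (z i) (y i)) :=
    fun z => (Finset.prod_mul_distrib).symm
  simp only [this]
  rw [← Fintype.prod_sum fun (i : Fin n) (t : Fin 2) => pauli (w i) (x i) t * pauli (w i) t (y i)]
  simp only [pauli_sq]
  rw [Matrix.one_apply]
  by_cases h : x = y
  · subst h; simp [Matrix.one_apply]
  · rw [if_neg h]
    obtain ⟨i, hi⟩ := Function.ne_iff.mp h
    exact Finset.prod_eq_zero (Finset.mem_univ i) (by simp [Matrix.one_apply, hi])

lemma psd_smul_real {N : Type*} [Fintype N] {A : Matrix N N ℂ} (hA : A.PosSemidef)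
    {r : ℝ} (hr : 0 ≤ r) : ((r : ℂ) • A).PosSemidef := by
  constructor
  · rw [Matrix.IsHermitian, conjTranspose_smul, hA.1.eq]
    congr 1
    simp [Complex.star_def, Complex.conj_ofReal]
  · intro x
    exact (hA.smul (by exact_mod_cast hr : (0 : ℂ) ≤ (r : ℂ))).2 x

lemma psd_trace_re_nonneg {N : Type*} [Fintype N] [DecidableEq N] {A : Matrix N N ℂ}
    (hA : A.PosSemidef) : 0 ≤ A.trace.re := by
  have h : ∀ i, (0 : ℂ) ≤ A i i := by
    intro i
    exact hA.diag_nonneg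
  rw [Matrix.trace, Complex.re_sum]
  exact Finset.sum_nonneg fun i _ => (Complex.le_def.mp (h i)).1

lemma psd_trace_mul_re_nonneg {N : Type*} [Fintype N] [DecidableEq N]
    {A B : Matrix N N ℂ} (hA : A.PosSemidef) (hB : B.PosSemidef) :
    0 ≤ (A * B).trace.re := by
  obtain ⟨C, rfl⟩ : ∃ C : Matrix N N ℂ, B = Cᴴ * C := by
    open scoped MatrixOrder in exact CStarAlgebra.nonneg_iff_eq_star_mul_self.mp hB.nonneg
  have : (A * (Cᴴ * C)).trace = (C * A * Cᴴ).trace := by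
    rw [← mul_assoc, Matrix.trace_mul_cycle]
  rw [this]
  exact psd_trace_re_nonneg (hA.mul_mul_conjTranspose_same C)

/-- The weight of a Pauli word: the number of non-identity tensor factors. -/
def wt {n : ℕ} (w : Fin n → Fin 4) : ℕ :=
  (Finset.univ.filter fun i => w i ≠ 0).card

/-- The `k`-th sector length of an `n`-qubit matrix:
the sum of squared Pauli expectation values over Pauli words of weight `k`. -/
noncomputable def sector (n k : ℕ) (ρ : Matrix (Fin n → Fin 2) (Fin n → Fin 2) ℂ) : ℝ :=
  ∑ w ∈ Finset.univ.filter fun w : Fin n → Fin 4 => wt w = k,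
    ((pWord w * ρ).trace.re) ^ 2

/-- An `n`-qubit quantum state: positive semidefinite with unit trace. -/
def IsState {n : ℕ} (ρ : Matrix (Fin n → Fin 2) (Fin n → Fin 2) ℂ) : Prop :=
  ρ.PosSemidef ∧ ρ.trace = 1

/-- If `M` is a finite set of pairwise anticommuting `n`-qubit Pauli words,
then for any `n`-qubit state `ρ`, `∑_{m ∈ M} Tr(mρ)² ≤ 1`. -/
theorem anticommuting_pauli_bound (n : ℕ) (M : Finset (Fin n → Fin 4))
    (hM : ∀ m ∈ M, ∀ m' ∈ M, m ≠ m' →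
      pWord m * pWord m' + pWord m' * pWord m = 0)
    (ρ : Matrix (Fin n → Fin 2) (Fin n → Fin 2) ℂ) (hρ : IsState ρ) :
    ∑ m ∈ M, ((pWord m * ρ).trace.re) ^ 2 ≤ 1 := by
  set c : (Fin n → Fin 4) → ℝ := fun m => (pWord m * ρ).trace.re with hc
  set s : ℝ := ∑ m ∈ M, c m ^ 2 with hs
  have hs0 : 0 ≤ s := Finset.sum_nonneg fun m _ => sq_nonneg _
  rcases eq_or_lt_of_le hs0 with hsz | hsp
  · rw [← hsz]; exact zero_le_one
  set r : ℝ := Real.sqrt s with hrdef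
  have hr0 : 0 < r := Real.sqrt_pos.mpr hsp
  have hr2 : r * r = s := Real.mul_self_sqrt hs0
  set A : Matrix (Fin n → Fin 2) (Fin n → Fin 2) ℂ :=
    ∑ m ∈ M, (c m : ℂ) • pWord m with hA
  -- A is hermitian
  have hAherm : A.IsHermitian := by
    rw [Matrix.IsHermitian, hA, conjTranspose_sum]
    refine Finset.sum_congr rfl fun m _ => ?_
    rw [conjTranspose_smul, (pWord_herm m).eq]
    congr 1
    simp [Complex.star_def, Complex.conj_ofReal]
  -- A * A = s • 1
  have expand : A * A = ∑ m ∈ M, ∑ m' ∈ M,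
      ((c m : ℂ) * (c m' : ℂ)) • (pWord m * pWord m') := by
    rw [hA, Finset.sum_mul_sum]
    exact Finset.sum_congr rfl fun m _ => Finset.sum_congr rfl fun m' _ => by
      rw [smul_mul_assoc, mul_smul_comm, smul_smul]
  have expand2 : A * A = ∑ m ∈ M, ∑ m' ∈ M,
      ((c m : ℂ) * (c m' : ℂ)) • (pWord m' * pWord m) := by
    rw [expand, Finset.sum_comm]
    exact Finset.sum_congr rfl fun m _ => Finset.sum_congr rfl fun m' _ => by
      rw [mul_comm]
  have hAsq : A * A = (s : ℂ) • 1 := by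
    have htwo : A * A + A * A = ∑ m ∈ M, ∑ m' ∈ M,
        ((c m : ℂ) * (c m' : ℂ)) • (pWord m * pWord m' + pWord m' * pWord m) := by
      have step : A * A + A * A =
          (∑ m ∈ M, ∑ m' ∈ M, ((c m : ℂ) * (c m' : ℂ)) • (pWord m * pWord m'))
          + ∑ m ∈ M, ∑ m' ∈ M, ((c m : ℂ) * (c m' : ℂ)) • (pWord m' * pWord m) := by
        rw [← expand, ← expand2]
      rw [step, ← Finset.sum_add_distrib]
      refine Finset.sum_congr rfl fun m _ => ?_
      rw [← Finset.sum_add_distrib]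
      exact Finset.sum_congr rfl fun m' _ => (smul_add _ _ _).symm
    have hinner : ∀ m ∈ M, (∑ m' ∈ M,
        ((c m : ℂ) * (c m' : ℂ)) • (pWord m * pWord m' + pWord m' * pWord m))
        = ((c m : ℂ) * (c m : ℂ)) • ((2 : ℂ) • (1 : Matrix (Fin n → Fin 2) (Fin n → Fin 2) ℂ)) := by
      intro m hm
      rw [Finset.sum_eq_single m]
      · rw [pWord_sq, two_smul]
      · intro m' hm' hne
        rw [hM m hm m' hm' (Ne.symm hne), smul_zero]
      · intro h; exact absurd hm h
    rw [Finset.sum_congr rfl hinner] at htwo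
    have split : ∀ m ∈ M, ((c m : ℂ) * (c m : ℂ)) • ((2 : ℂ) • (1 : Matrix (Fin n → Fin 2) (Fin n → Fin 2) ℂ))
        = ((c m : ℂ)^2) • 1 + ((c m : ℂ)^2) • 1 := by
      intro m _
      rw [two_smul, smul_add, sq]
    rw [Finset.sum_congr rfl split, Finset.sum_add_distrib] at htwo
    have hsum : (∑ m ∈ M, ((c m : ℂ)^2) • (1 : Matrix (Fin n → Fin 2) (Fin n → Fin 2) ℂ))
        = (s : ℂ) • 1 := by
      rw [← Finset.sum_smul, hs]
      push_cast
      rfl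
    rw [hsum] at htwo
    have h2 : (2 : ℂ) • (A * A) = (2 : ℂ) • ((s : ℂ) • (1 : Matrix (Fin n → Fin 2) (Fin n → Fin 2) ℂ)) := by
      rw [two_smul, two_smul]; exact htwo
    exact smul_right_injective _ two_ne_zero h2
  set B : Matrix (Fin n → Fin 2) (Fin n → Fin 2) ℂ := (r : ℂ) • 1 - A with hB
  have hBherm : B.IsHermitian := by
    rw [Matrix.IsHermitian, hB, conjTranspose_sub, conjTranspose_smul, conjTranspose_one,
      hAherm.eq]
    congr 1
    simp [Complex.star_def, Complex.conj_ofReal]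
  have hsc : (s : ℂ) = (r : ℂ) * (r : ℂ) := by exact_mod_cast hr2.symm
  have hBsq : B * B = ((2 * r : ℝ) : ℂ) • B := by
    rw [hB, sub_mul, mul_sub, mul_sub, hAsq, hsc]
    simp only [smul_mul_assoc, mul_smul_comm, one_mul, mul_one, smul_smul]
    match_scalars <;> push_cast <;> ring
  have hBpsd : B.PosSemidef := by
    have hBB : Bᴴ * B = ((2 * r : ℝ) : ℂ) • B := by rw [hBherm.eq, hBsq]
    have hEq : B = (((2 * r)⁻¹ : ℝ) : ℂ) • (Bᴴ * B) := by
      rw [hBB, smul_smul, ← Complex.ofReal_mul, inv_mul_cancel₀ (by positivity), Complex.ofReal_one,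
        one_smul]
    rw [hEq]
    exact psd_smul_real (Matrix.posSemidef_conjTranspose_mul_self B) (by positivity)
  have htrA : (A * ρ).trace = ∑ m ∈ M, (c m : ℂ) * (pWord m * ρ).trace := by
    rw [hA, Finset.sum_mul, trace_sum]
    exact Finset.sum_congr rfl fun m _ => by rw [smul_mul_assoc, trace_smul, smul_eq_mul]
  have htrAre : (A * ρ).trace.re = s := by
    rw [htrA, Complex.re_sum, hs]
    exact Finset.sum_congr rfl fun m _ => by
      simp [Complex.mul_re, hc, sq]
  have htr : (B * ρ).trace.re = r - s := by
    rw [hB, sub_mul, trace_sub, smul_mul_assoc, one_mul, trace_smul, hρ.2, Complex.sub_re,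
      htrAre]
    simp
  have hnn := psd_trace_mul_re_nonneg hBpsd hρ.1
  rw [htr] at hnn
  have hsler : s ≤ r := by linarith
  calc ∑ m ∈ M, ((pWord m * ρ).trace.re) ^ 2 = s := by rw [hs]
  _ ≤ 1 := by nlinarith
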